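/- Let u, v, λ be positive real numbers and set h = 1/u + 1/v, g = 1/λ + u/(v(u+v+λ)) − h, q = 1/(uv) − (v+λ)/(v(u+v+λ)²), and l = v/u + (u+v)/(u+v+λ). Define for t > 0 the average AoI Δ̄(t) = ( h²e^{2ut} + (h(g − t) − 1/(uv))e^{ut} + g/λ + q )/( h e^{ut} + g ) + ( (l + λt)e^{ut} − l + u/(u+v+λ) )/( λe^{ut} + v ). Then Δ̄ is strictly monotonically increasing on (0, +∞). -/

import Mathlib

open Real Set

noncomputable def aoiBarT (u v lam : ℝ) (t : ℝ) : ℝ :=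
  let h := 1 / u + 1 / v
  let g := 1 / lam + u / (v * (u + v + lam)) - h
  let q := 1 / (u * v) - (v + lam) / (v * (u + v + lam) ^ 2)
  let l := v / u + (u + v) / (u + v + lam)
  (h ^ 2 * Real.exp (2 * u * t) + (h * (g - t) - 1 / (u * v)) * Real.exp (u * t)
      + g / lam + q) / (h * Real.exp (u * t) + g)
    + ((l + lam * t) * Real.exp (u * t) - l + u / (u + v + lam))
      / (lam * Real.exp (u * t) + v)

set_option maxHeartbeats 1000000 in
theorem statement19 (u v lam : ℝ) (hu : 0 < u) (hv : 0 < v) (hlam : 0 < lam) :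
    StrictMonoOn (aoiBarT u v lam) (Ioi 0) := by
  have hs : (0:ℝ) < u + v + lam := by positivity
  have hu' : u ≠ 0 := hu.ne'
  have hv' : v ≠ 0 := hv.ne'
  have hlam' : lam ≠ 0 := hlam.ne'
  have hs' : u + v + lam ≠ 0 := hs.ne'
  obtain ⟨h, hh⟩ : ∃ x : ℝ, x = 1 / u + 1 / v := ⟨_, rfl⟩
  obtain ⟨g, hg⟩ : ∃ x : ℝ, x = 1 / lam + u / (v * (u + v + lam)) - h := ⟨_, rfl⟩
  obtain ⟨q, hq⟩ : ∃ x : ℝ, x = 1 / (u * v) - (v + lam) / (v * (u + v + lam) ^ 2) := ⟨_, rfl⟩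
  obtain ⟨l, hl⟩ : ∃ x : ℝ, x = v / u + (u + v) / (u + v + lam) := ⟨_, rfl⟩
  have hfun : aoiBarT u v lam = fun t =>
      (h ^ 2 * Real.exp (2 * u * t) + (h * (g - t) - 1 / (u * v)) * Real.exp (u * t)
        + g / lam + q) / (h * Real.exp (u * t) + g)
      + ((l + lam * t) * Real.exp (u * t) - l + u / (u + v + lam))
        / (lam * Real.exp (u * t) + v) := by
    funext t
    rw [hg, hh, hq, hl]
    rfl
  have hhpos : 0 < h := by rw [hh]; positivity
  have hmpos : 0 < h + g := by
    have e : h + g = 1 / lam + u / (v * (u + v + lam)) := by rw [hg]; ring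
    rw [e]; positivity
  obtain ⟨c2, hc2d⟩ : ∃ x : ℝ, x = u * h ^ 3 := ⟨_, rfl⟩
  obtain ⟨c1, hc1d⟩ : ∃ x : ℝ, x = 2 * u * h ^ 2 * g - h ^ 2 := ⟨_, rfl⟩
  obtain ⟨c0, hc0d⟩ : ∃ x : ℝ, x =
    u * h * g ^ 2 - h * g - u * g * (1 / (u * v)) - h * u * (g / lam + q) := ⟨_, rfl⟩
  have hc2pos : 0 < c2 := by rw [hc2d, hh]; positivity
  have hS0 : 0 < c2 + c1 + c0 := by
    have e : c2 + c1 + c0 = (u*v^2*lam + 2*u*v^3 + 2*u^2*v*lam + 4*u^2*v^2 + u^3*lam + 2*u^3*v)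
        / (v^3 * lam * (u + v + lam)^2) := by
      rw [hc2d, hc1d, hc0d, hq, hg, hh]; field_simp; ring
    rw [e]; positivity
  have hS1 : 0 < 2*c2 + c1 - g*h := by
    have e : 2*c2 + c1 - g*h = (v^3*lam + v^4 + 4*u*v^2*lam + 4*u*v^3 + 5*u^2*v*lam + 5*u^2*v^2
        + 2*u^3*lam + 2*u^3*v) / (u * v^3 * lam * (u + v + lam)) := by
      rw [hc2d, hc1d, hg, hh]; field_simp; ring
    rw [e]; positivity
  have hS2 : 0 < 3*c2 + 2*c1 + c0 - g*h := by
    have e : 3*c2 + 2*c1 + c0 - g*h = (v^3*lam^2 + 2*v^4*lam + v^5 + 4*u*v^2*lam^2 + 9*u*v^3*lam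
        + 5*u*v^4 + 5*u^2*v*lam^2 + 15*u^2*v^2*lam + 11*u^2*v^3 + 2*u^3*lam^2 + 11*u^3*v*lam
        + 11*u^3*v^2 + 3*u^4*lam + 4*u^4*v) / (u * v^3 * lam * (u + v + lam)^2) := by
      rw [hc2d, hc1d, hc0d, hq, hg, hh]; field_simp; ring
    rw [e]; positivity
  have hS4 : 0 < 3*c2 + c1 := by
    have e : 3*c2 + c1 = (v^2*lam^2 + 3*v^3*lam + 2*v^4 + 2*u*v*lam^2 + 9*u*v^2*lam + 6*u*v^3
        + u^2*lam^2 + 9*u^2*v*lam + 6*u^2*v^2 + 3*u^3*lam + 2*u^3*v)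
        / (u * v^3 * lam * (u + v + lam)) := by
      rw [hc2d, hc1d, hg, hh]; field_simp; ring
    rw [e]; positivity
  have hl1 : 0 < l := by rw [hl]; positivity
  have hl2 : 0 < l - u / (u + v + lam) := by
    have e : l - u / (u + v + lam) = v / u + v / (u + v + lam) := by
      rw [hl]; field_simp; ring
    rw [e]; positivity
  have hD1pos : ∀ t : ℝ, 0 < t → 0 < h * Real.exp (u * t) + g := by
    intro t ht
    have hE1 : 1 < Real.exp (u * t) := by
      calc (1:ℝ) = Real.exp 0 := (Real.exp_zero).symm
      _ < Real.exp (u * t) := Real.exp_lt_exp.mpr (by positivity)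
    linarith [mul_pos hhpos (sub_pos.mpr hE1), hmpos]
  have hD2pos : ∀ t : ℝ, 0 < lam * Real.exp (u * t) + v := by
    intro t; positivity
  have HD : ∀ t : ℝ, 0 < t → HasDerivAt (aoiBarT u v lam)
      (((2*u*h^2*Real.exp (2*u*t) + (u*(h*(g - t) - 1/(u*v)) - h)*Real.exp (u*t))
          * (h*Real.exp (u*t) + g)
        - (h^2*Real.exp (2*u*t) + (h*(g - t) - 1/(u*v))*Real.exp (u*t) + g/lam + q)
          * (h*(u*Real.exp (u*t)))) / (h*Real.exp (u*t) + g)^2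
      + ((lam*Real.exp (u*t) + (l + lam*t)*(u*Real.exp (u*t))) * (lam*Real.exp (u*t) + v)
        - ((l + lam*t)*Real.exp (u*t) - l + u/(u+v+lam)) * (lam*(u*Real.exp (u*t))))
          / (lam*Real.exp (u*t) + v)^2) t := by
    intro t ht
    rw [hfun]
    have hE : HasDerivAt (fun t : ℝ => Real.exp (u * t)) (u * Real.exp (u * t)) t := by
      have h1 : HasDerivAt (fun t : ℝ => u * t) u t := by
        simpa using (hasDerivAt_id t).const_mul u
      simpa [mul_comm] using h1.exp
    have hE2 : HasDerivAt (fun t : ℝ => Real.exp (2 * u * t)) (2 * u * Real.exp (2 * u * t)) t := by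
      have h1 : HasDerivAt (fun t : ℝ => 2 * u * t) (2 * u) t := by
        simpa using (hasDerivAt_id t).const_mul (2 * u)
      simpa [mul_comm] using h1.exp
    have hN1 : HasDerivAt (fun t : ℝ => h ^ 2 * Real.exp (2 * u * t)
          + (h * (g - t) - 1 / (u * v)) * Real.exp (u * t) + g / lam + q)
        (2*u*h^2*Real.exp (2*u*t) + (u*(h*(g - t) - 1/(u*v)) - h)*Real.exp (u*t)) t := by
      have hf1 : HasDerivAt (fun t : ℝ => h * (g - t) - 1 / (u * v)) (-h) t := by
        have h2 : HasDerivAt (fun t : ℝ => g - t) (-1) t := by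
          simpa using (hasDerivAt_id t).const_sub g
        have h3 := (h2.const_mul h).sub_const (1 / (u * v))
        exact h3.congr_deriv (by ring)
      have h4 := (((hE2.const_mul (h ^ 2)).add (hf1.mul hE)).add_const (g / lam)).add_const q
      exact h4.congr_deriv (by ring)
    have hD1 : HasDerivAt (fun t : ℝ => h * Real.exp (u * t) + g)
        (h * (u * Real.exp (u * t))) t := (hE.const_mul h).add_const g
    have hN2 : HasDerivAt (fun t : ℝ => (l + lam * t) * Real.exp (u * t) - l + u / (u + v + lam))
        (lam * Real.exp (u * t) + (l + lam * t) * (u * Real.exp (u * t))) t := by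
      have hf2 : HasDerivAt (fun t : ℝ => l + lam * t) lam t := by
        simpa using ((hasDerivAt_id t).const_mul lam).const_add l
      exact ((hf2.mul hE).sub_const l).add_const (u / (u + v + lam))
    have hD2 : HasDerivAt (fun t : ℝ => lam * Real.exp (u * t) + v)
        (lam * (u * Real.exp (u * t))) t := (hE.const_mul lam).add_const v
    exact (hN1.div hD1 (hD1pos t ht).ne').add (hN2.div hD2 (hD2pos t).ne')
  have hpos : ∀ t : ℝ, 0 < t →
      0 < ((2*u*h^2*Real.exp (2*u*t) + (u*(h*(g - t) - 1/(u*v)) - h)*Real.exp (u*t))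
          * (h*Real.exp (u*t) + g)
        - (h^2*Real.exp (2*u*t) + (h*(g - t) - 1/(u*v))*Real.exp (u*t) + g/lam + q)
          * (h*(u*Real.exp (u*t)))) / (h*Real.exp (u*t) + g)^2
      + ((lam*Real.exp (u*t) + (l + lam*t)*(u*Real.exp (u*t))) * (lam*Real.exp (u*t) + v)
        - ((l + lam*t)*Real.exp (u*t) - l + u/(u+v+lam)) * (lam*(u*Real.exp (u*t))))
          / (lam*Real.exp (u*t) + v)^2 := by
    intro t ht
    have e1 : Real.exp (2*u*t) = Real.exp (u*t) * Real.exp (u*t) := by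
      rw [← Real.exp_add]; ring_nf
    rw [e1]
    obtain ⟨E, hE⟩ : ∃ x : ℝ, x = Real.exp (u * t) := ⟨_, rfl⟩
    rw [← hE]
    have hEpos : 0 < E := by rw [hE]; exact Real.exp_pos _
    have hut : u * t + 1 < E := by rw [hE]; exact Real.add_one_lt_exp (mul_pos hu ht).ne'
    have hE1 : 1 < E := by linarith [mul_pos hu ht]
    have hd1 : 0 < h * E + g := by rw [hE]; exact hD1pos t ht
    have hd2 : 0 < lam * E + v := by rw [hE]; exact hD2pos t
    -- second summand positive
    have hpos2 : 0 < (lam*E + (l + lam*t)*(u*E)) * (lam*E + v)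
        - ((l + lam*t)*E - l + u/(u+v+lam)) * (lam*(u*E)) := by
      have key2 : (lam*E + (l + lam*t)*(u*E)) * (lam*E + v)
          - ((l + lam*t)*E - l + u/(u+v+lam)) * (lam*(u*E))
          = E * (lam^2*E + lam*v + u*v*(l + lam*t) + lam*u*(l - u/(u+v+lam))) := by ring
      rw [key2]
      have h1 : 0 < u*v*(l + lam*t) := mul_pos (mul_pos hu hv) (add_pos hl1 (mul_pos hlam ht))
      have h2 : 0 < lam*u*(l - u/(u+v+lam)) := mul_pos (mul_pos hlam hu) hl2
      have h3 : 0 < lam^2*E := mul_pos (pow_pos hlam 2) hEpos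
      have h4 : 0 < lam*v := mul_pos hlam hv
      have h5 : 0 < lam^2*E + lam*v + u*v*(l + lam*t) + lam*u*(l - u/(u+v+lam)) := by linarith
      exact mul_pos hEpos h5
    -- first summand positive
    have hpos1 : 0 < (2*u*h^2*(E*E) + (u*(h*(g - t) - 1/(u*v)) - h)*E) * (h*E + g)
        - (h^2*(E*E) + (h*(g - t) - 1/(u*v))*E + g/lam + q) * (h*(u*E)) := by
      have key1 : (2*u*h^2*(E*E) + (u*(h*(g - t) - 1/(u*v)) - h)*E) * (h*E + g)
          - (h^2*(E*E) + (h*(g - t) - 1/(u*v))*E + g/lam + q) * (h*(u*E))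
          = E * (c2*E^2 + c1*E + c0 - u*g*h*t) := by
        rw [hc2d, hc1d, hc0d]; ring
      rw [key1]
      have hP : 0 < c2*E^2 + c1*E + c0 - u*g*h*t := by
        rcases le_or_gt 0 g with hg0 | hg0
        · have h6 : 0 ≤ g*h := mul_nonneg hg0 hhpos.le
          have h7 : (0:ℝ) ≤ E - 1 - u*t := by linarith
          have hb : u*g*h*t ≤ g*h*(E - 1) := by linarith [mul_nonneg h6 h7]
          have id1 : c2*E^2 + c1*E + c0 - g*h*(E - 1)
              = (c2 + c1 + c0) + c2*(E - 1)^2 + (E - 1)*(2*c2 + c1 - g*h) := by ring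
          have h8 : 0 ≤ c2*(E - 1)^2 := mul_nonneg hc2pos.le (sq_nonneg _)
          have h9 : 0 < (E - 1)*(2*c2 + c1 - g*h) := mul_pos (by linarith) hS1
          linarith [id1, hb, h8, h9, hS0]
        · have hut2 : E - 1 < E * (u * t) := by
            have hx : -(u*t) + 1 < Real.exp (-(u*t)) :=
              Real.add_one_lt_exp (neg_ne_zero.mpr (mul_pos hu ht).ne')
            rw [Real.exp_neg, ← hE] at hx
            have h10 := mul_lt_mul_of_pos_left hx hEpos
            rw [mul_inv_cancel₀ hEpos.ne'] at h10
            linarith [h10]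
          have h6 : 0 < (-g)*h := mul_pos (by linarith) hhpos
          have hb2 : u*g*h*t*E < g*h*(E - 1) := by
            linarith [mul_lt_mul_of_pos_left hut2 h6]
          have id2 : c2*E^3 + c1*E^2 + c0*E - g*h*(E - 1)
              = (c2 + c1 + c0) + (E - 1)*(3*c2 + 2*c1 + c0 - g*h)
                + c2*(E - 1)^3 + (E - 1)^2*(3*c2 + c1) := by ring
          have h8 : 0 < (E - 1)*(3*c2 + 2*c1 + c0 - g*h) := mul_pos (by linarith) hS2
          have h9 : 0 ≤ c2*(E - 1)^3 := mul_nonneg hc2pos.le (pow_nonneg (by linarith) 3)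
          have h11 : 0 < (E - 1)^2*(3*c2 + c1) := mul_pos (pow_pos (by linarith) 2) hS4
          have hEP : 0 < E * (c2*E^2 + c1*E + c0 - u*g*h*t) := by
            linarith [id2, hb2, h8, h9, h11, hS0]
          by_contra hcon
          push_neg at hcon
          linarith [mul_nonpos_of_nonneg_of_nonpos hEpos.le hcon, hEP]
      exact mul_pos hEpos hP
    exact add_pos (div_pos hpos1 (by positivity)) (div_pos hpos2 (by positivity))
  apply strictMonoOn_of_deriv_pos (convex_Ioi 0)
  · intro t ht
    exact ((HD t ht).continuousAt).continuousWithinAt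
  · intro t ht
    rw [interior_Ioi] at ht
    rw [(HD t ht).deriv]
    exact hpos t ht
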